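/- arXiv:2604.18357 — 5 statements merged into one kernel-verified Lean document; each statement's English description precedes it below -/
import Mathlib

section
/- Consider the deterministic SPRING recursion θ_{k+1} = θ_k + η_k Δθ_k with Δθ_k = (λI + S(θ_k))⁻¹(λμ Δθ_{k−1} − (1/2)g(θ_k)), where g = ∇L, each S(θ) is symmetric positive semidefinite, L is bounded below by E*, g is C_g-Lipschitz, the step-sizes satisfy 0 < η_k ≤ η_{k−1} and η₀ ≤ 2λ(1−μ)/C_g, and 0 ≤ μ < 1. Then the discrete energy F_k := L(θ_k) + λμ η_k ‖Δθ_{k−1}‖² is monotonically non-increasing, and ∑_{k=0}^∞ η_k‖Δθ_k‖² < ∞. -/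
open InnerProductSpace intervalIntegral

lemma line_hasDerivAt {E : Type*} [NormedAddCommGroup E] [InnerProductSpace ℝ E]
    [CompleteSpace E]
    (L : E → ℝ) (hdiff : Differentiable ℝ L) (x v : E) (t : ℝ) :
    HasDerivAt (fun s : ℝ => L (x + s • v))
      (inner ℝ (gradient L (x + t • v)) v : ℝ) t := by
  have h1 : HasFDerivAt L (toDual ℝ E (gradient L (x + t • v))) (x + t • v) :=
    (hasGradientAt_iff_hasFDerivAt).1 (hdiff _).hasGradientAt
  have h2 : HasDerivAt (fun s : ℝ => x + s • v) v t := by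
    simpa using ((hasDerivAt_id t).smul_const v).const_add x
  have := h1.comp_hasDerivAt t h2
  exact this

lemma descent {E : Type*} [NormedAddCommGroup E] [InnerProductSpace ℝ E]
    [CompleteSpace E]
    (L : E → ℝ) (hdiff : Differentiable ℝ L) {Cg : ℝ} (hCg : 0 ≤ Cg)
    (hlip : ∀ a b, ‖gradient L a - gradient L b‖ ≤ Cg * ‖a - b‖) (x v : E) :
    L (x + v) ≤ L x + inner ℝ (gradient L x) v + Cg / 2 * ‖v‖ ^ 2 := by
  have hgc : Continuous (gradient L) := by
    have : LipschitzWith (Real.toNNReal Cg) (gradient L) := by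
      refine LipschitzWith.of_dist_le_mul fun a b => ?_
      simpa [dist_eq_norm, Real.coe_toNNReal Cg hCg] using hlip a b
    exact this.continuous
  have hφ' : Continuous fun t : ℝ => (inner ℝ (gradient L (x + t • v)) v : ℝ) := by
    exact (hgc.comp (by continuity)).inner continuous_const
  have hFTC : (∫ t in (0:ℝ)..1, (inner ℝ (gradient L (x + t • v)) v : ℝ))
      = L (x + v) - L x := by
    have := intervalIntegral.integral_eq_sub_of_hasDerivAt
      (f := fun s : ℝ => L (x + s • v))
      (f' := fun t : ℝ => (inner ℝ (gradient L (x + t • v)) v : ℝ))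
      (a := 0) (b := 1)
      (fun t _ => line_hasDerivAt L hdiff x v t)
      (hφ'.intervalIntegrable 0 1)
    simpa using this
  have hmono : (∫ t in (0:ℝ)..1, (inner ℝ (gradient L (x + t • v)) v : ℝ))
      ≤ ∫ t in (0:ℝ)..1, ((inner ℝ (gradient L x) v : ℝ) + Cg * t * ‖v‖ ^ 2) := by
    apply intervalIntegral.integral_mono_on (by norm_num)
      (hφ'.intervalIntegrable 0 1)
      ((by continuity : Continuous fun t : ℝ => (inner ℝ (gradient L x) v : ℝ) + Cg * t * ‖v‖ ^ 2).intervalIntegrable 0 1)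
    intro t ht
    rcases ht with ⟨ht0, ht1⟩
    have h1 : (inner ℝ (gradient L (x + t • v)) v : ℝ)
        - (inner ℝ (gradient L x) v : ℝ)
        = inner ℝ (gradient L (x + t • v) - gradient L x) v := by
      rw [inner_sub_left]
    have h2 : (inner ℝ (gradient L (x + t • v) - gradient L x) v : ℝ)
        ≤ ‖gradient L (x + t • v) - gradient L x‖ * ‖v‖ :=
      real_inner_le_norm _ _
    have h3 : ‖gradient L (x + t • v) - gradient L x‖ ≤ Cg * (t * ‖v‖) := by
      have := hlip (x + t • v) x
      simpa [norm_smul, abs_of_nonneg ht0, mul_assoc] using this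
    nlinarith [norm_nonneg v, mul_le_mul_of_nonneg_right h3 (norm_nonneg v)]
  have hcalc : (∫ t in (0:ℝ)..1, ((inner ℝ (gradient L x) v : ℝ) + Cg * t * ‖v‖ ^ 2))
      = (inner ℝ (gradient L x) v : ℝ) + Cg / 2 * ‖v‖ ^ 2 := by
    have he : (fun t : ℝ => Cg * t * ‖v‖ ^ 2) = fun t : ℝ => (Cg * ‖v‖ ^ 2) * t := by
      ext t; ring
    rw [intervalIntegral.integral_add (intervalIntegrable_const)
      (by apply Continuous.intervalIntegrable; continuity), he,
      intervalIntegral.integral_const_mul, integral_id]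
    simp
    ring
  linarith [hFTC ▸ hmono, hcalc ▸ hmono]

/-- deterministic SPRING. Here `D k` denotes `Δθ_{k-1}`, so that
`D (k+1) = Δθ_k` and the recursion `(λI + S(θ_k)) Δθ_k = λμ Δθ_{k−1} − (1/2) g(θ_k)` reads
`lam • D (k+1) + S (θ k) (D (k+1)) = (lam*μ) • D k − (1/2) • ∇L(θ k)`.  The discrete energy
`F k = L(θ k) + λ μ η_k ‖Δθ_{k−1}‖²` is non-increasing and `∑ η_k ‖Δθ_k‖² < ∞`. -/
theorem stmt5 {n : ℕ} (lam mu Cg Estar : ℝ) (hlam : 0 < lam) (hmu0 : 0 ≤ mu) (hmu1 : mu < 1)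
    (hCg : 0 < Cg)
    (L : EuclideanSpace ℝ (Fin n) → ℝ) (hdiff : Differentiable ℝ L)
    (hbelow : ∀ θ, Estar ≤ L θ)
    (hlip : ∀ θ θ', ‖gradient L θ - gradient L θ'‖ ≤ Cg * ‖θ - θ'‖)
    (S : EuclideanSpace ℝ (Fin n) → EuclideanSpace ℝ (Fin n) →L[ℝ] EuclideanSpace ℝ (Fin n))
    (hSsymm : ∀ θ v w, (inner ℝ (S θ v) w : ℝ) = inner ℝ v (S θ w))
    (hSpos : ∀ θ v, 0 ≤ (inner ℝ (S θ v) v : ℝ))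
    (η : ℕ → ℝ) (hηpos : ∀ k, 0 < η k) (hηmono : ∀ k, η (k + 1) ≤ η k)
    (hη0 : η 0 ≤ 2 * lam * (1 - mu) / Cg)
    (θ D : ℕ → EuclideanSpace ℝ (Fin n))
    (hrec : ∀ k, lam • D (k + 1) + S (θ k) (D (k + 1))
      = (lam * mu) • D k - (2 : ℝ)⁻¹ • gradient L (θ k))
    (hstep : ∀ k, θ (k + 1) = θ k + η k • D (k + 1)) :
    (∀ k, L (θ (k + 1)) + lam * mu * η (k + 1) * ‖D (k + 1)‖ ^ 2
        ≤ L (θ k) + lam * mu * η k * ‖D k‖ ^ 2)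
    ∧ Summable (fun k => η k * ‖D (k + 1)‖ ^ 2) := by
  set c := lam * (1 - mu) with hc_def
  have hc : 0 < c := mul_pos hlam (by linarith)
  have hη0' : ∀ k, η k ≤ η 0 := by
    intro k; induction k with
    | zero => exact le_refl _
    | succ k ih => exact (hηmono k).trans ih
  have key : ∀ k, L (θ (k + 1)) + lam * mu * η (k + 1) * ‖D (k + 1)‖ ^ 2
      + c * (η k * ‖D (k + 1)‖ ^ 2)
      ≤ L (θ k) + lam * mu * η k * ‖D k‖ ^ 2 := by
    intro k
    have hd := descent L hdiff hCg.le hlip (θ k) (η k • D (k + 1))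
    rw [← hstep k] at hd
    have hinn : (inner ℝ (gradient L (θ k)) (η k • D (k + 1)) : ℝ)
        = η k * inner ℝ (gradient L (θ k)) (D (k + 1)) := real_inner_smul_right _ _ _
    have hnorm : ‖η k • D (k + 1)‖ ^ 2 = η k ^ 2 * ‖D (k + 1)‖ ^ 2 := by
      rw [norm_smul]; rw [Real.norm_eq_abs, mul_pow, sq_abs]
    rw [hinn, hnorm] at hd
    have hi := congrArg (fun w => (inner ℝ w (D (k + 1)) : ℝ)) (hrec k)
    simp only [inner_add_left, inner_sub_left, real_inner_smul_left] at hi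
    rw [real_inner_self_eq_norm_sq] at hi
    have hS := hSpos (θ k) (D (k + 1))
    have hcs : 2 * (inner ℝ (D k) (D (k + 1)) : ℝ) ≤ ‖D k‖ ^ 2 + ‖D (k + 1)‖ ^ 2 := by
      nlinarith [real_inner_le_norm (D k) (D (k + 1)), sq_nonneg (‖D k‖ - ‖D (k + 1)‖)]
    have hCgη : Cg * η k ≤ 2 * lam * (1 - mu) := by
      have h1 : Cg * η 0 ≤ 2 * lam * (1 - mu) := by
        rw [← le_div_iff₀' hCg]; exact hη0
      nlinarith [hη0' k, hηpos k]
    have hek := hηpos k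
    have hek1 := hηmono k
    have hb : (0:ℝ) ≤ ‖D (k + 1)‖ ^ 2 := sq_nonneg _
    have ha : (0:ℝ) ≤ ‖D k‖ ^ 2 := sq_nonneg _
    nlinarith [mul_le_mul_of_nonneg_left hcs (mul_nonneg (mul_nonneg hlam.le hmu0) hek.le),
      mul_nonneg hS hek.le,
      mul_le_mul_of_nonneg_right hCgη (mul_nonneg hek.le hb),
      mul_le_mul_of_nonneg_right (mul_le_mul_of_nonneg_left hek1 (mul_nonneg hlam.le hmu0)) hb]
  refine ⟨fun k => by nlinarith [key k, mul_nonneg (mul_nonneg hc.le (hηpos k).le) (sq_nonneg ‖D (k+1)‖)], ?_⟩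
  set F : ℕ → ℝ := fun k => L (θ k) + lam * mu * η k * ‖D k‖ ^ 2 with hF
  have hFbelow : ∀ k, Estar ≤ F k := fun k => by
    have := hbelow (θ k)
    have h0 : (0:ℝ) ≤ lam * mu * η k * ‖D k‖ ^ 2 :=
      mul_nonneg (mul_nonneg (mul_nonneg hlam.le hmu0) (hηpos k).le) (sq_nonneg _)
    simp only [hF]; nlinarith [hbelow (θ k)]
  apply summable_of_sum_range_le (c := (F 0 - Estar) / c)
    (fun k => mul_nonneg (hηpos k).le (sq_nonneg _))
  intro N
  rw [le_div_iff₀ hc]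
  have htel : ∑ k ∈ Finset.range N, (F k - F (k + 1)) = F 0 - F N :=
    Finset.sum_range_sub' F N
  have hsum : ∑ k ∈ Finset.range N, c * (η k * ‖D (k + 1)‖ ^ 2)
      ≤ ∑ k ∈ Finset.range N, (F k - F (k + 1)) := by
    apply Finset.sum_le_sum
    intro k _
    have := key k
    simp only [hF]
    linarith
  rw [← Finset.mul_sum] at hsum
  have := hFbelow N
  calc (∑ k ∈ Finset.range N, η k * ‖D (k + 1)‖ ^ 2) * c
      = c * ∑ k ∈ Finset.range N, η k * ‖D (k + 1)‖ ^ 2 := mul_comm _ _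
    _ ≤ F 0 - F N := by rw [← htel]; exact hsum
    _ ≤ F 0 - Estar := by linarith
end

section
/- Under the hypotheses of the deterministic SPRING recursion with 0 ≤ μ < 1 (λ > 0, S(θ) positive semidefinite with ‖S(θ)‖₂ ≤ √C_m uniformly, g C_g-Lipschitz with ‖g(θ)‖ ≤ 2√C_m uniformly, L bounded below, non-increasing step-sizes with η₀ ≤ 2λ(1−μ)/C_g), there exists a constant C > 0 such that for all K ≥ 1, ∑_{k=1}^K η_k ‖g(θ_k)‖² ≤ C. -/
open InnerProductSpace

lemma descent_aux {E : Type*} [NormedAddCommGroup E] [InnerProductSpace ℝ E] [CompleteSpace E]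
    {L : E → ℝ} {Cg : ℝ} (hdiff : Differentiable ℝ L)
    (hlip : ∀ θ θ', ‖gradient L θ - gradient L θ'‖ ≤ Cg * ‖θ - θ'‖) (x v : E) :
    L (x + v) ≤ L x + (inner ℝ (gradient L x) v : ℝ) + Cg / 2 * ‖v‖ ^ 2 := by
  have hfd : ∀ (y w : E), (fderiv ℝ L y) w = (inner ℝ (gradient L y) w : ℝ) := by
    intro y w
    rw [gradient]
    rw [← InnerProductSpace.toDual_apply_apply, LinearIsometryEquiv.apply_symm_apply]
  have hφ : ∀ t : ℝ, HasDerivAt (fun t : ℝ => L (x + t • v))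
      ((inner ℝ (gradient L (x + t • v)) v : ℝ)) t := by
    intro t
    have hu : HasDerivAt (fun t : ℝ => x + t • v) v t := by
      simpa using ((hasDerivAt_id t).smul_const v).const_add x
    have := ((hdiff (x + t • v)).hasFDerivAt).comp_hasDerivAt t hu
    rw [hfd] at this; exact this
  set h : ℝ → ℝ := fun t =>
    L (x + t • v) - t * (inner ℝ (gradient L x) v : ℝ) - Cg / 2 * t ^ 2 * ‖v‖ ^ 2 with hh_def
  have hh : ∀ t : ℝ, HasDerivAt h
      ((inner ℝ (gradient L (x + t • v)) v : ℝ) - (inner ℝ (gradient L x) v : ℝ)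
        - Cg * t * ‖v‖ ^ 2) t := by
    intro t
    have h2 : HasDerivAt (fun t : ℝ => t * (inner ℝ (gradient L x) v : ℝ))
        ((inner ℝ (gradient L x) v : ℝ)) t := by
      simpa using (hasDerivAt_id t).mul_const _
    have h3 : HasDerivAt (fun t : ℝ => Cg / 2 * t ^ 2 * ‖v‖ ^ 2) (Cg * t * ‖v‖ ^ 2) t := by
      have := ((hasDerivAt_pow 2 t).const_mul (Cg / 2)).mul_const (‖v‖ ^ 2)
      exact this.congr_deriv (by rw [show (2:ℕ) - 1 = 1 from rfl, pow_one]; push_cast; ring)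
    exact ((hφ t).sub h2).sub h3
  have hanti : AntitoneOn h (Set.Icc 0 1) := by
    apply antitoneOn_of_deriv_nonpos (convex_Icc 0 1)
    · exact (Differentiable.continuous (fun t => (hh t).differentiableAt)).continuousOn
    · exact fun t _ => (hh t).differentiableAt.differentiableWithinAt
    · intro t ht
      rw [interior_Icc] at ht
      rw [(hh t).deriv]
      have h1 : (inner ℝ (gradient L (x + t • v)) v : ℝ) - (inner ℝ (gradient L x) v : ℝ)
          = (inner ℝ (gradient L (x + t • v) - gradient L x) v : ℝ) := by
        rw [inner_sub_left]
      have h2 : (inner ℝ (gradient L (x + t • v) - gradient L x) v : ℝ)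
          ≤ ‖gradient L (x + t • v) - gradient L x‖ * ‖v‖ := real_inner_le_norm _ _
      have h3 : ‖gradient L (x + t • v) - gradient L x‖ ≤ Cg * (t * ‖v‖) := by
        have := hlip (x + t • v) x
        simpa [norm_smul, abs_of_pos ht.1] using this
      nlinarith [norm_nonneg v, ht.1.le]
  have := hanti (Set.left_mem_Icc.2 zero_le_one) (Set.right_mem_Icc.2 zero_le_one) zero_le_one
  simp only [hh_def] at this
  simp only [zero_smul, add_zero, one_smul, zero_mul, sub_zero, one_pow, mul_one, zero_pow] at this
  linarith

/-- deterministic SPRING with `0 ≤ μ < 1`: there is a constant `C > 0` such that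
`∑_{k=1}^K η_k ‖g(θ_k)‖² ≤ C` for all `K ≥ 1`.  Here `D k` denotes `Δθ_{k-1}`. -/
theorem stmt6 {n : ℕ} (lam mu Cg Cm Egs : ℝ) (hlam : 0 < lam) (hmu0 : 0 ≤ mu) (hmu1 : mu < 1)
    (hCg : 0 < Cg) (hCm : 0 < Cm)
    (L : EuclideanSpace ℝ (Fin n) → ℝ) (hdiff : Differentiable ℝ L)
    (hbelow : ∀ θ, Egs ≤ L θ)
    (hlip : ∀ θ θ', ‖gradient L θ - gradient L θ'‖ ≤ Cg * ‖θ - θ'‖)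
    (hgbound : ∀ θ, ‖gradient L θ‖ ≤ 2 * Real.sqrt Cm)
    (S : EuclideanSpace ℝ (Fin n) → EuclideanSpace ℝ (Fin n) →L[ℝ] EuclideanSpace ℝ (Fin n))
    (hSsymm : ∀ θ v w, (inner ℝ (S θ v) w : ℝ) = inner ℝ v (S θ w))
    (hSpos : ∀ θ v, 0 ≤ (inner ℝ (S θ v) v : ℝ))
    (hSbound : ∀ θ, ‖S θ‖ ≤ Real.sqrt Cm)
    (η : ℕ → ℝ) (hηpos : ∀ k, 0 < η k) (hηmono : ∀ k, η (k + 1) ≤ η k)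
    (hη0 : η 0 ≤ 2 * lam * (1 - mu) / Cg)
    (θ D : ℕ → EuclideanSpace ℝ (Fin n))
    (hrec : ∀ k, lam • D (k + 1) + S (θ k) (D (k + 1))
      = (lam * mu) • D k - (2 : ℝ)⁻¹ • gradient L (θ k))
    (hstep : ∀ k, θ (k + 1) = θ k + η k • D (k + 1)) :
    ∃ C > 0, ∀ K, 1 ≤ K →
      ∑ k ∈ Finset.Icc 1 K, η k * ‖gradient L (θ k)‖ ^ 2 ≤ C := by
  -- abbreviations
  set a : ℕ → ℝ := fun k => η k * ‖D (k + 1)‖ ^ 2 with ha_def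
  have ha_nonneg : ∀ k, 0 ≤ a k := fun k => mul_nonneg (hηpos k).le (sq_nonneg _)
  have hηle0 : ∀ k, η k ≤ η 0 := by
    intro k
    induction k with
    | zero => exact le_refl _
    | succ m ih => exact (hηmono m).trans ih
  have hCgη : ∀ k, Cg * η k ≤ 2 * lam * (1 - mu) := by
    intro k
    have h1 : Cg * η k ≤ Cg * η 0 := mul_le_mul_of_nonneg_left (hηle0 k) hCg.le
    have h2 : Cg * η 0 ≤ 2 * lam * (1 - mu) := by
      rw [mul_comm]
      exact (le_div_iff₀ hCg).1 hη0
    linarith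
  -- inner product bound from the recursion
  have hinner : ∀ k, (inner ℝ (gradient L (θ k)) (D (k + 1)) : ℝ)
      ≤ lam * mu * (‖D k‖ ^ 2 + ‖D (k + 1)‖ ^ 2) - 2 * lam * ‖D (k + 1)‖ ^ 2 := by
    intro k
    have e := congrArg (fun w => (inner ℝ w (D (k + 1)) : ℝ)) (hrec k)
    simp only [inner_add_left, inner_sub_left, inner_smul_left, RCLike.inner_apply,
      conj_trivial, real_inner_self_eq_norm_sq] at e
    have hpos := hSpos (θ k) (D (k + 1))
    have hDk := real_inner_le_norm (D k) (D (k + 1))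
    have hamgm : ‖D k‖ * ‖D (k + 1)‖ ≤ (‖D k‖ ^ 2 + ‖D (k + 1)‖ ^ 2) / 2 := by
      nlinarith [sq_nonneg (‖D k‖ - ‖D (k + 1)‖)]
    have hlm : 0 ≤ lam * mu := mul_nonneg hlam.le hmu0
    nlinarith [mul_le_mul_of_nonneg_left (hDk.trans hamgm) hlm]
  -- descent step
  have hdesc : ∀ k, L (θ (k + 1)) ≤ L (θ k) - lam * a k + lam * mu * (η k * ‖D k‖ ^ 2) := by
    intro k
    have hd := descent_aux hdiff hlip (θ k) (η k • D (k + 1))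
    rw [← hstep k] at hd
    rw [real_inner_smul_right, norm_smul, Real.norm_eq_abs, abs_of_pos (hηpos k)] at hd
    have hi := hinner k
    have hη := hηpos k
    have hC := hCgη k
    have hn2 : (0:ℝ) ≤ ‖D (k + 1)‖ ^ 2 := sq_nonneg _
    have h1 : η k * (inner ℝ (gradient L (θ k)) (D (k + 1)) : ℝ)
        ≤ η k * (lam * mu * (‖D k‖ ^ 2 + ‖D (k + 1)‖ ^ 2) - 2 * lam * ‖D (k + 1)‖ ^ 2) :=
      mul_le_mul_of_nonneg_left hi hη.le
    have h2 : Cg / 2 * (η k * ‖D (k + 1)‖) ^ 2 ≤ lam * (1 - mu) * (η k * ‖D (k + 1)‖ ^ 2) := by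
      have h3 : Cg * η k * (η k * ‖D (k + 1)‖ ^ 2)
          ≤ 2 * lam * (1 - mu) * (η k * ‖D (k + 1)‖ ^ 2) :=
        mul_le_mul_of_nonneg_right hC (mul_nonneg hη.le hn2)
      nlinarith
    show L (θ (k + 1)) ≤ L (θ k) - lam * (η k * ‖D (k + 1)‖ ^ 2)
      + lam * mu * (η k * ‖D k‖ ^ 2)
    nlinarith
  -- telescoping
  have hP : ∀ K, L (θ (K + 1)) ≤ L (θ 0) + lam * mu * (η 0 * ‖D 0‖ ^ 2)
      - lam * (1 - mu) * (∑ k ∈ Finset.range (K + 1), a k) - lam * mu * a K := by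
    intro K
    induction K with
    | zero =>
      have h0 := hdesc 0
      have hs : ∑ k ∈ Finset.range (0 + 1), a k = a 0 := by simp
      rw [hs]
      linarith
    | succ m ih =>
      have hd := hdesc (m + 1)
      have hmono : η (m + 1) * ‖D (m + 1)‖ ^ 2 ≤ a m :=
        mul_le_mul_of_nonneg_right (hηmono m) (sq_nonneg _)
      have hlm : 0 ≤ lam * mu := mul_nonneg hlam.le hmu0
      have h3 : lam * mu * (η (m + 1) * ‖D (m + 1)‖ ^ 2) ≤ lam * mu * a m :=
        mul_le_mul_of_nonneg_left hmono hlm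
      rw [Finset.sum_range_succ (n := m + 1)]
      linarith
  set A : ℝ := (L (θ 0) - Egs + lam * mu * (η 0 * ‖D 0‖ ^ 2)) / (lam * (1 - mu)) with hA_def
  have hlm1 : 0 < lam * (1 - mu) := mul_pos hlam (by linarith)
  have hA : ∀ K, ∑ k ∈ Finset.range (K + 1), a k ≤ A := by
    intro K
    rw [hA_def, le_div_iff₀ hlm1]
    have h1 := hP K
    have h2 := hbelow (θ (K + 1))
    have h3 : 0 ≤ lam * mu * a K := mul_nonneg (mul_nonneg hlam.le hmu0) (ha_nonneg K)
    nlinarith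
  have hA0 : 0 ≤ A := (Finset.sum_nonneg fun k _ => ha_nonneg k).trans (hA 0)
  -- gradient bound from recursion
  have hsq : 0 < Real.sqrt Cm := Real.sqrt_pos.2 hCm
  have hgb : ∀ k, ‖gradient L (θ k)‖
      ≤ 2 * (lam * mu) * ‖D k‖ + 2 * (lam + Real.sqrt Cm) * ‖D (k + 1)‖ := by
    intro k
    have e2 : gradient L (θ k)
        = (2 : ℝ) • ((lam * mu) • D k - lam • D (k + 1) - S (θ k) (D (k + 1))) := by
      have e := hrec k
      have h4 : (2 : ℝ)⁻¹ • gradient L (θ k)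
          = (lam * mu) • D k - lam • D (k + 1) - S (θ k) (D (k + 1)) := by
        rw [sub_sub, eq_sub_iff_add_eq, add_comm]
        exact eq_sub_iff_add_eq.mp e
      calc gradient L (θ k) = (2 : ℝ) • ((2 : ℝ)⁻¹ • gradient L (θ k)) := by
            rw [smul_smul]; norm_num
        _ = _ := by rw [h4]
    have hS : ‖S (θ k) (D (k + 1))‖ ≤ Real.sqrt Cm * ‖D (k + 1)‖ :=
      ((S (θ k)).le_opNorm _).trans
        (mul_le_mul_of_nonneg_right (hSbound (θ k)) (norm_nonneg _))
    calc ‖gradient L (θ k)‖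
        = 2 * ‖(lam * mu) • D k - lam • D (k + 1) - S (θ k) (D (k + 1))‖ := by
          rw [e2, norm_smul]; norm_num
      _ ≤ 2 * (‖(lam * mu) • D k‖ + ‖lam • D (k + 1)‖ + ‖S (θ k) (D (k + 1))‖) := by
          have h5 := norm_sub_le ((lam * mu) • D k - lam • D (k + 1)) (S (θ k) (D (k + 1)))
          have h6 := norm_sub_le ((lam * mu) • D k) (lam • D (k + 1))
          linarith
      _ ≤ 2 * (lam * mu) * ‖D k‖ + 2 * (lam + Real.sqrt Cm) * ‖D (k + 1)‖ := by
          rw [norm_smul, norm_smul, Real.norm_eq_abs, Real.norm_eq_abs,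
            abs_of_nonneg (mul_nonneg hlam.le hmu0), abs_of_pos hlam]
          nlinarith [norm_nonneg (D (k + 1))]
  set B : ℝ := 8 * (lam * mu) ^ 2 + 8 * (lam + Real.sqrt Cm) ^ 2 with hB_def
  have hB0 : 0 < B := by positivity
  -- per-term bound for k ≥ 1
  have hterm : ∀ i : ℕ, η (i + 1) * ‖gradient L (θ (i + 1))‖ ^ 2 ≤ B * a i + B * a (i + 1) := by
    intro i
    have hg := hgb (i + 1)
    have hg2 : ‖gradient L (θ (i + 1))‖ ^ 2
        ≤ 8 * (lam * mu) ^ 2 * ‖D (i + 1)‖ ^ 2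
          + 8 * (lam + Real.sqrt Cm) ^ 2 * ‖D (i + 2)‖ ^ 2 := by
      nlinarith [norm_nonneg (gradient L (θ (i + 1))), norm_nonneg (D (i + 1)),
        norm_nonneg (D (i + 2)),
        sq_nonneg (2 * (lam * mu) * ‖D (i + 1)‖ - 2 * (lam + Real.sqrt Cm) * ‖D (i + 2)‖)]
    have hη := (hηpos (i + 1)).le
    have h1 : η (i + 1) * ‖gradient L (θ (i + 1))‖ ^ 2
        ≤ η (i + 1) * (8 * (lam * mu) ^ 2 * ‖D (i + 1)‖ ^ 2
          + 8 * (lam + Real.sqrt Cm) ^ 2 * ‖D (i + 2)‖ ^ 2) :=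
      mul_le_mul_of_nonneg_left hg2 hη
    have hmono : η (i + 1) * ‖D (i + 1)‖ ^ 2 ≤ a i :=
      mul_le_mul_of_nonneg_right (hηmono i) (sq_nonneg _)
    have ha1 : a (i + 1) = η (i + 1) * ‖D (i + 2)‖ ^ 2 := rfl
    have hn1 : 0 ≤ η (i + 1) * ‖D (i + 1)‖ ^ 2 := mul_nonneg hη (sq_nonneg _)
    have hn2 : 0 ≤ η (i + 1) * ‖D (i + 2)‖ ^ 2 := mul_nonneg hη (sq_nonneg _)
    have hc1 : 0 ≤ 8 * (lam * mu) ^ 2 := by positivity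
    have hc2 : 0 ≤ 8 * (lam + Real.sqrt Cm) ^ 2 := by positivity
    have t1 : 8 * (lam * mu) ^ 2 * (η (i + 1) * ‖D (i + 1)‖ ^ 2) ≤ B * a i := by
      have t1a : 8 * (lam * mu) ^ 2 * (η (i + 1) * ‖D (i + 1)‖ ^ 2)
          ≤ 8 * (lam * mu) ^ 2 * a i := mul_le_mul_of_nonneg_left hmono hc1
      have t1b : 8 * (lam * mu) ^ 2 * a i ≤ B * a i :=
        mul_le_mul_of_nonneg_right (by rw [hB_def]; linarith) (ha_nonneg i)
      linarith
    have t2 : 8 * (lam + Real.sqrt Cm) ^ 2 * (η (i + 1) * ‖D (i + 2)‖ ^ 2)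
        ≤ B * a (i + 1) := by
      rw [ha1]
      exact mul_le_mul_of_nonneg_right (by rw [hB_def]; linarith) hn2
    have hr : η (i + 1) * (8 * (lam * mu) ^ 2 * ‖D (i + 1)‖ ^ 2
          + 8 * (lam + Real.sqrt Cm) ^ 2 * ‖D (i + 2)‖ ^ 2)
        = 8 * (lam * mu) ^ 2 * (η (i + 1) * ‖D (i + 1)‖ ^ 2)
          + 8 * (lam + Real.sqrt Cm) ^ 2 * (η (i + 1) * ‖D (i + 2)‖ ^ 2) := by ring
    linarith [h1, hr.le, hr.ge]
  have hC0 : 0 < 2 * B * A + 1 := by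
    have : 0 ≤ 2 * B * A := mul_nonneg (mul_nonneg (by norm_num) hB0.le) hA0
    linarith
  refine ⟨2 * B * A + 1, hC0, fun K hK => ?_⟩
  have hre : ∑ k ∈ Finset.Icc 1 K, η k * ‖gradient L (θ k)‖ ^ 2
      = ∑ i ∈ Finset.range K, η (i + 1) * ‖gradient L (θ (i + 1))‖ ^ 2 := by
    rw [show Finset.Icc 1 K = Finset.Ico 1 (K + 1) from by rw [Finset.Ico_add_one_right_eq_Icc]]
    rw [Finset.sum_Ico_eq_sum_range]
    simp [add_comm]
  rw [hre]
  have hsum : ∑ i ∈ Finset.range K, η (i + 1) * ‖gradient L (θ (i + 1))‖ ^ 2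
      ≤ ∑ i ∈ Finset.range K, (B * a i + B * a (i + 1)) :=
    Finset.sum_le_sum fun i _ => hterm i
  have hs1 : ∑ i ∈ Finset.range K, a i ≤ A := by
    rcases Nat.exists_eq_add_of_le hK with ⟨m, rfl⟩
    calc ∑ i ∈ Finset.range (1 + m), a i = ∑ i ∈ Finset.range (m + 1), a i := by
          rw [add_comm]
      _ ≤ A := hA m
  have hs2 : ∑ i ∈ Finset.range K, a (i + 1) ≤ A := by
    have h0 : ∑ i ∈ Finset.range K, a (i + 1) + a 0 = ∑ i ∈ Finset.range (K + 1), a i :=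
      (Finset.sum_range_succ' a K).symm
    have h7 := hA K
    have h8 := ha_nonneg 0
    linarith
  calc ∑ i ∈ Finset.range K, η (i + 1) * ‖gradient L (θ (i + 1))‖ ^ 2
      ≤ ∑ i ∈ Finset.range K, (B * a i + B * a (i + 1)) := hsum
    _ = B * (∑ i ∈ Finset.range K, a i) + B * (∑ i ∈ Finset.range K, a (i + 1)) := by
        rw [Finset.sum_add_distrib, Finset.mul_sum, Finset.mul_sum]
    _ ≤ B * A + B * A := by gcongr
    _ ≤ 2 * B * A + 1 := by linarith
end

section
/- Let S ∈ ℝ^{n×n} be fixed symmetric positive semidefinite with kernel projector P. Consider the recursion Δθ_k = (λI + S)⁻¹(λμ Δθ_{k−1} − (1/2)g_k), where each g_k lies in the range of S. Then P Δθ_k = μ^k P Δθ₀ for all k ≥ 0, and the iterate θ_{k+1} = θ₀ + ∑_{m=0}^k η_m Δθ_m satisfies P θ_{k+1} = P θ₀ + (∑_{m=0}^k η_m μ^m) P Δθ₀. -/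
/-- fixed-SR-matrix SPRING recursion. `P` is the orthogonal projection onto
`ker S`; each `g k` lies in `ran S`.  Then `P Δθ_k = μ^k P Δθ₀` and
`P θ_{k+1} = P θ₀ + (∑_{m=0}^k η_m μ^m) P Δθ₀`. -/
theorem stmt9 {n : ℕ} (lam mu : ℝ) (hlam : 0 < lam) (hmu0 : 0 ≤ mu) (hmu1 : mu ≤ 1)
    (S : EuclideanSpace ℝ (Fin n) →L[ℝ] EuclideanSpace ℝ (Fin n))
    (hSsymm : ∀ v w, (inner ℝ (S v) w : ℝ) = inner ℝ v (S w))
    (hSpos : ∀ v, 0 ≤ (inner ℝ (S v) v : ℝ))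
    (P : EuclideanSpace ℝ (Fin n) →L[ℝ] EuclideanSpace ℝ (Fin n))
    (hP : P = (LinearMap.ker (S : EuclideanSpace ℝ (Fin n) →ₗ[ℝ] EuclideanSpace ℝ (Fin n))).subtypeL.comp (Submodule.orthogonalProjectionOnto (LinearMap.ker (S : EuclideanSpace ℝ (Fin n) →ₗ[ℝ] EuclideanSpace ℝ (Fin n)))))
    (g : ℕ → EuclideanSpace ℝ (Fin n))
    (hg : ∀ k, g k ∈ LinearMap.range (S : EuclideanSpace ℝ (Fin n) →ₗ[ℝ] EuclideanSpace ℝ (Fin n)))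
    (η : ℕ → ℝ) (D θ : ℕ → EuclideanSpace ℝ (Fin n))
    (hrec : ∀ k, lam • D (k + 1) + S (D (k + 1)) = (lam * mu) • D k - (2 : ℝ)⁻¹ • g (k + 1))
    (hθ : ∀ k, θ (k + 1) = θ 0 + ∑ m ∈ Finset.range (k + 1), η m • D m) :
    (∀ k, P (D k) = mu ^ k • P (D 0)) ∧
    (∀ k, P (θ (k + 1)) = P (θ 0) + (∑ m ∈ Finset.range (k + 1), η m * mu ^ m) • P (D 0)) := by
  -- any vector in the range of S is killed by P
  have hker : ∀ v, v ∈ LinearMap.range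
      (S : EuclideanSpace ℝ (Fin n) →ₗ[ℝ] EuclideanSpace ℝ (Fin n)) → P v = 0 := by
    intro v hv
    have hvmem : v ∈ (LinearMap.ker (S : EuclideanSpace ℝ (Fin n) →ₗ[ℝ] EuclideanSpace ℝ (Fin n)))ᗮ := by
      obtain ⟨w, rfl⟩ := hv
      intro u hu
      have hu0 : S u = 0 := hu
      calc (inner ℝ u (S w) : ℝ) = inner ℝ (S u) w := (hSsymm u w).symm
        _ = 0 := by rw [hu0]; simp
    rw [hP]
    simp only [ContinuousLinearMap.coe_comp', Function.comp_apply,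
      Submodule.subtypeL_apply]
    rw [Submodule.orthogonalProjectionOnto_apply_of_mem_orthogonal hvmem]
    simp
  have hPS : ∀ v, P (S v) = 0 := fun v => hker (S v) ⟨v, rfl⟩
  have hPg : ∀ k, P (g k) = 0 := fun k => hker (g k) (hg k)
  have h1 : ∀ k, P (D k) = mu ^ k • P (D 0) := by
    intro k
    induction k with
    | zero => simp
    | succ k ih =>
      have h := congrArg P (hrec k)
      simp only [map_add, map_sub, map_smul, hPS, hPg, add_zero, smul_zero, sub_zero] at h
      have : P (D (k + 1)) = mu • P (D k) := by
        have hlam' : lam ≠ 0 := ne_of_gt hlam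
        have := h
        rw [mul_smul] at this
        calc P (D (k + 1)) = lam⁻¹ • (lam • P (D (k + 1))) := by
              rw [smul_smul, inv_mul_cancel₀ hlam', one_smul]
          _ = lam⁻¹ • (lam • (mu • P (D k))) := by rw [this]
          _ = mu • P (D k) := by
              rw [smul_smul, smul_smul, inv_mul_cancel₀ hlam', one_mul]
      rw [this, ih, smul_smul, pow_succ, mul_comm]
  refine ⟨h1, fun k => ?_⟩
  rw [hθ k, map_add, map_sum]
  congr 1
  rw [Finset.sum_smul]
  refine Finset.sum_congr rfl fun m _ => ?_
  rw [map_smul, h1 m, smul_smul, mul_smul]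
end

section
/- In the fixed-SR-matrix SPRING recursion with μ = 1, if P Δθ₀ ≠ 0 and ∑_{m=0}^∞ η_m = ∞, then ‖θ_k‖ → ∞; more precisely, ‖θ_{k+1}‖ ≥ (∑_{m=0}^k η_m)·‖PΔθ₀‖ − ‖Pθ₀‖, so ‖θ_k‖ grows at least like ∑ η_m. -/
/-- fixed-SR-matrix SPRING with `μ = 1`: if `P Δθ₀ ≠ 0` and the step-sizes are
positive with divergent sum, then `‖θ_{k+1}‖ ≥ (∑_{m=0}^k η_m)‖PΔθ₀‖ − ‖Pθ₀‖` and
`‖θ_k‖ → ∞`. -/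
theorem stmt10 {n : ℕ} (lam : ℝ) (hlam : 0 < lam)
    (S : EuclideanSpace ℝ (Fin n) →L[ℝ] EuclideanSpace ℝ (Fin n))
    (hSsymm : ∀ v w, (inner ℝ (S v) w : ℝ) = inner ℝ v (S w))
    (hSpos : ∀ v, 0 ≤ (inner ℝ (S v) v : ℝ))
    (P : EuclideanSpace ℝ (Fin n) →L[ℝ] EuclideanSpace ℝ (Fin n))
    (hP : P = (LinearMap.ker (S : EuclideanSpace ℝ (Fin n) →ₗ[ℝ] EuclideanSpace ℝ (Fin n))).subtypeL.comp
      (LinearMap.ker (S : EuclideanSpace ℝ (Fin n) →ₗ[ℝ] EuclideanSpace ℝ (Fin n))).orthogonalProjectionOnto)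
    (g : ℕ → EuclideanSpace ℝ (Fin n))
    (hg : ∀ k, g k ∈ LinearMap.range (S : EuclideanSpace ℝ (Fin n) →ₗ[ℝ] EuclideanSpace ℝ (Fin n)))
    (η : ℕ → ℝ) (hη : ∀ m, 0 < η m)
    (hdiv : Filter.Tendsto (fun k => ∑ m ∈ Finset.range (k + 1), η m) Filter.atTop Filter.atTop)
    (D θ : ℕ → EuclideanSpace ℝ (Fin n))
    (hrec : ∀ k, lam • D (k + 1) + S (D (k + 1)) = lam • D k - (2 : ℝ)⁻¹ • g (k + 1))
    (hθ : ∀ k, θ (k + 1) = θ 0 + ∑ m ∈ Finset.range (k + 1), η m • D m)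
    (hPD0 : P (D 0) ≠ 0) :
    (∀ k, (∑ m ∈ Finset.range (k + 1), η m) * ‖P (D 0)‖ - ‖P (θ 0)‖ ≤ ‖θ (k + 1)‖) ∧
    Filter.Tendsto (fun k => ‖θ k‖) Filter.atTop Filter.atTop := by
  set K := LinearMap.ker (S : EuclideanSpace ℝ (Fin n) →ₗ[ℝ] EuclideanSpace ℝ (Fin n))
  -- P kills anything in the range of S
  have hPker : ∀ v, v ∈ LinearMap.range (S : EuclideanSpace ℝ (Fin n) →ₗ[ℝ]
      EuclideanSpace ℝ (Fin n)) → P v = 0 := by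
    intro v hv
    have hmem : v ∈ Kᗮ := by
      rw [Submodule.mem_orthogonal]
      intro u hu
      obtain ⟨w, hw⟩ := hv
      have hSu : S u = 0 := hu
      have h1 : (inner ℝ u v : ℝ) = inner ℝ (S u) w := by
        rw [← hw]; exact (hSsymm u w).symm
      rw [h1, hSu]; simp
    rw [hP]
    simp only [ContinuousLinearMap.coe_comp', Function.comp_apply,
      Submodule.subtypeL_apply]
    have h0 := Submodule.orthogonalProjectionOnto_apply_of_mem_orthogonal hmem
    rw [h0]
    simp
  -- P D k is constant
  have hPD : ∀ k, P (D k) = P (D 0) := by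
    intro k
    induction k with
    | zero => rfl
    | succ k ih =>
      have h := congrArg P (hrec k)
      simp only [map_add, map_smul, map_sub] at h
      have hz : P (S (D (k + 1))) = 0 := hPker _ ⟨D (k + 1), rfl⟩
      rw [hz, hPker _ (hg (k + 1)), smul_zero, sub_zero, add_zero] at h
      have := smul_right_injective (EuclideanSpace ℝ (Fin n)) hlam.ne' h
      rw [this, ih]
  -- norm of P application is ≤ norm
  have hPnorm : ∀ v, ‖P v‖ ≤ ‖v‖ := by
    intro v
    rw [hP]
    simp only [ContinuousLinearMap.coe_comp', Function.comp_apply,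
      Submodule.subtypeL_apply]
    calc ‖(K.orthogonalProjectionOnto v : EuclideanSpace ℝ (Fin n))‖
        ≤ ‖K.orthogonalProjectionOnto‖ * ‖v‖ := (K.orthogonalProjectionOnto).le_opNorm v
      _ ≤ 1 * ‖v‖ := by
          exact mul_le_mul_of_nonneg_right (Submodule.orthogonalProjectionOnto_norm_le K) (norm_nonneg v)
      _ = ‖v‖ := one_mul _
  have key : ∀ k, (∑ m ∈ Finset.range (k + 1), η m) * ‖P (D 0)‖ - ‖P (θ 0)‖
      ≤ ‖θ (k + 1)‖ := by
    intro k
    have hPθ : P (θ (k + 1)) = P (θ 0) + (∑ m ∈ Finset.range (k + 1), η m) • P (D 0) := by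
      rw [hθ k, map_add, map_sum]
      congr 1
      rw [Finset.sum_smul]
      refine Finset.sum_congr rfl fun m _ => ?_
      rw [map_smul, hPD m]
    have h1 : ‖(∑ m ∈ Finset.range (k + 1), η m) • P (D 0)‖
        ≤ ‖P (θ (k + 1))‖ + ‖P (θ 0)‖ := by
      have : (∑ m ∈ Finset.range (k + 1), η m) • P (D 0)
          = P (θ (k + 1)) - P (θ 0) := by rw [hPθ]; abel
      rw [this]
      exact norm_sub_le _ _
    have hnn : 0 ≤ ∑ m ∈ Finset.range (k + 1), η m :=
      Finset.sum_nonneg fun m _ => (hη m).le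
    rw [norm_smul, Real.norm_of_nonneg hnn] at h1
    have := hPnorm (θ (k + 1))
    linarith
  refine ⟨key, ?_⟩
  rw [← Filter.tendsto_add_atTop_iff_nat 1]
  refine Filter.tendsto_atTop_mono (fun k => key k) ?_
  have hpos : 0 < ‖P (D 0)‖ := norm_pos_iff.mpr hPD0
  exact Filter.tendsto_atTop_add_const_right _ _
    (Filter.Tendsto.atTop_mul_const hpos hdiv)
end

section
/- Let O ∈ ℝ^{p×s} satisfy O·𝟙 = 0, where 𝟙 ∈ ℝ^s is the all-ones vector, and let λ > 0. Then O(λI + OᵀO + (1/s)𝟙𝟙ᵀ)⁻¹ = O(λI + OᵀO)⁻¹. -/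
open Matrix

private lemma smul_one_posDef {s : ℕ} {lam : ℝ} (hlam : 0 < lam) :
    (lam • (1 : Matrix (Fin s) (Fin s) ℝ)).PosDef := by
  rw [Matrix.posDef_iff_dotProduct_mulVec]
  refine ⟨by simp [Matrix.IsHermitian], fun x hx => ?_⟩
  simp only [smul_mulVec, one_mulVec, dotProduct_smul, smul_eq_mul]
  exact mul_pos hlam (Matrix.dotProduct_star_self_pos_iff.mpr hx)

private lemma smul_J_posSemidef {s : ℕ} {c : ℝ} (hc : 0 ≤ c) :
    (c • (Matrix.of (fun _ _ => (1 : ℝ)) : Matrix (Fin s) (Fin s) ℝ)).PosSemidef := by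
  rw [Matrix.posSemidef_iff_dotProduct_mulVec]
  refine ⟨by ext i j; simp [Matrix.IsHermitian, conjTranspose_apply], fun x => ?_⟩
  have h : star x ⬝ᵥ (c • (Matrix.of (fun _ _ => (1:ℝ)) : Matrix (Fin s) (Fin s) ℝ)).mulVec x
      = c * ((∑ i, x i) * (∑ i, x i)) := by
    simp [dotProduct, mulVec, Finset.sum_mul, Finset.mul_sum, mul_comm, mul_left_comm]
  rw [h]
  exact mul_nonneg hc (mul_self_nonneg _)

/-- SPRING's rank-one stabilization: if `O 𝟙 = 0` and `λ > 0`, then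
`O (λI + OᵀO + (1/s) 𝟙𝟙ᵀ)⁻¹ = O (λI + OᵀO)⁻¹`. -/
theorem stmt17 {p s : ℕ} (O : Matrix (Fin p) (Fin s) ℝ) (lam : ℝ) (hlam : 0 < lam)
    (hO : O.mulVec (fun _ => 1) = 0) :
    O * (lam • (1 : Matrix (Fin s) (Fin s) ℝ) + Oᵀ * O
          + (s : ℝ)⁻¹ • Matrix.of (fun _ _ => (1 : ℝ)))⁻¹
      = O * (lam • (1 : Matrix (Fin s) (Fin s) ℝ) + Oᵀ * O)⁻¹ := by
  set J : Matrix (Fin s) (Fin s) ℝ := Matrix.of (fun _ _ => (1 : ℝ)) with hJ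
  set A : Matrix (Fin s) (Fin s) ℝ := lam • (1 : Matrix (Fin s) (Fin s) ℝ) + Oᵀ * O with hA
  set B : Matrix (Fin s) (Fin s) ℝ := A + (s : ℝ)⁻¹ • J with hB
  have hOtO : (Oᵀ * O).PosSemidef := by
    have := Matrix.posSemidef_conjTranspose_mul_self O
    rwa [conjTranspose_eq_transpose_of_trivial] at this
  have hApd : A.PosDef := (smul_one_posDef hlam).add_posSemidef hOtO
  have hBpd : B.PosDef := hApd.add_posSemidef
    (smul_J_posSemidef (by positivity : (0:ℝ) ≤ (s:ℝ)⁻¹))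
  -- O * J = 0
  have hOJ : O * J = 0 := by
    ext i j
    have := congrFun hO i
    simpa [mulVec, dotProduct, hJ, mul_apply] using this
  -- Oᵀ O J = 0
  have hOtOJ : Oᵀ * O * J = 0 := by rw [Matrix.mul_assoc, hOJ, Matrix.mul_zero]
  -- A * J = lam • J
  have hAJ : A * J = lam • J := by
    rw [hA, Matrix.add_mul, hOtOJ, add_zero, Matrix.smul_mul, Matrix.one_mul]
  have hdetA : IsUnit A.det := (Matrix.isUnit_iff_isUnit_det A).mp hApd.isUnit
  -- A⁻¹ * J = lam⁻¹ • J
  have hAinvJ : A⁻¹ * J = lam⁻¹ • J := by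
    have h1 : lam • (A⁻¹ * J) = J := by
      have : A⁻¹ * (A * J) = J := by
        rw [← Matrix.mul_assoc, Matrix.nonsing_inv_mul _ hdetA, Matrix.one_mul]
      rwa [hAJ, Matrix.mul_smul] at this
    calc A⁻¹ * J = lam⁻¹ • (lam • (A⁻¹ * J)) := by
          rw [smul_smul, inv_mul_cancel₀ hlam.ne', one_smul]
      _ = lam⁻¹ • J := by rw [h1]
  have hdetB : IsUnit B.det := (Matrix.isUnit_iff_isUnit_det B).mp hBpd.isUnit
  -- key : O * A⁻¹ * B = O
  have hkey : O * A⁻¹ * B = O := by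
    rw [hB, Matrix.mul_add, Matrix.mul_assoc O A⁻¹ A, Matrix.nonsing_inv_mul _ hdetA,
      Matrix.mul_one, Matrix.mul_smul, Matrix.mul_assoc, hAinvJ, Matrix.mul_smul, hOJ]
    simp
  calc O * B⁻¹ = O * A⁻¹ * B * B⁻¹ := by rw [hkey]
    _ = O * A⁻¹ * (B * B⁻¹) := by rw [Matrix.mul_assoc]
    _ = O * A⁻¹ := by rw [Matrix.mul_nonsing_inv _ hdetB, Matrix.mul_one]
end
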